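/- Let Y, X, Z, X', Z' be sets with maps π_u: Z → X, η_X: X → X', η_Z: Z → Z', π'_u: Z' → X' such that η_X ∘ π_u = π'_u ∘ η_Z, and suppose the map π_u × η_Z: Z → {(x,z') ∈ X × Z' : η_X(x) = π'_u(z')} is a bijection. Let π_s: Y → X, π'_s: Y' → X', η_Y: Y → Y' be maps with π'_s ∘ η_Y = η_X ∘ π_s. Define Σ₁₁ = {(y₀,y₁,z₀,z₁) ∈ Y²×Z² : π_s(y₀)=π_s(y₁)=π_u(z₀)=π_u(z₁)}, Σ'₁₁ similarly with primes, Σ₁₀ = {(y₀,y₁,z₀) : π_s(y₀)=π_s(y₁)=π_u(z₀)}, and let η₁₁: Σ₁₁ → Σ'₁₁ be the map applying η_Y, η_Y, η_Z, η_Z coordinatewise, δ: Σ₁₁ → Σ₁₀ the map deleting the last Z-coordinate, and similarly δ': Σ'₁₁ → Σ'₁₀ and η₁₀: Σ₁₀ → Σ'₁₀. Then η₁₁ × δ: Σ₁₁ → {(a,b) ∈ Σ'₁₁ × Σ₁₀ : δ'(a) = η₁₀(b)} is a bijection. -/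

import Mathlib

variable {Y X Z Y' X' Z' : Type*}

/-- The 1,1-fold fibre product: pairs of `Y`'s and pairs of `Z`'s with equal images in `X`. -/
def Sig11 (πs : Y → X) (πu : Z → X) : Type _ :=
  {q : (Y × Y) × Z × Z //
    πs q.1.1 = πs q.1.2 ∧ πs q.1.1 = πu q.2.1 ∧ πs q.1.1 = πu q.2.2}

/-- The 1,0-fold fibre product. -/
def Sig10 (πs : Y → X) (πu : Z → X) : Type _ :=
  {q : (Y × Y) × Z // πs q.1.1 = πs q.1.2 ∧ πs q.1.1 = πu q.2}

/-- The coordinatewise map `Σ₁₁ → Σ'₁₁` induced by `η_Y`, `η_Z`. -/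
def eta11 (πs : Y → X) (πu : Z → X) (ηX : X → X') (ηY : Y → Y') (ηZ : Z → Z')
    (πs' : Y' → X') (πu' : Z' → X')
    (hY : ∀ y, πs' (ηY y) = ηX (πs y)) (hZ : ∀ z, πu' (ηZ z) = ηX (πu z)) :
    Sig11 πs πu → Sig11 πs' πu' := fun q =>
  ⟨((ηY q.val.1.1, ηY q.val.1.2), (ηZ q.val.2.1, ηZ q.val.2.2)),
   by
    obtain ⟨h1, h2, h3⟩ := q.prop
    refine ⟨?_, ?_, ?_⟩ <;> simp only [hY, hZ, ← h1, ← h2, ← h3]⟩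

/-- The coordinatewise map `Σ₁₀ → Σ'₁₀`. -/
def eta10 (πs : Y → X) (πu : Z → X) (ηX : X → X') (ηY : Y → Y') (ηZ : Z → Z')
    (πs' : Y' → X') (πu' : Z' → X')
    (hY : ∀ y, πs' (ηY y) = ηX (πs y)) (hZ : ∀ z, πu' (ηZ z) = ηX (πu z)) :
    Sig10 πs πu → Sig10 πs' πu' := fun q =>
  ⟨((ηY q.val.1.1, ηY q.val.1.2), ηZ q.val.2),
   by
    obtain ⟨h1, h2⟩ := q.prop
    exact ⟨by simp only [hY, h1], by simp only [hY, hZ, h2]⟩⟩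

/-- Deleting the last `Z`-coordinate. -/
def delta11 (πs : Y → X) (πu : Z → X) : Sig11 πs πu → Sig10 πs πu := fun q =>
  ⟨(q.val.1, q.val.2.1), ⟨q.prop.1, q.prop.2.1⟩⟩

theorem stmt5 (πs : Y → X) (πu : Z → X) (ηX : X → X') (ηY : Y → Y') (ηZ : Z → Z')
    (πs' : Y' → X') (πu' : Z' → X')
    (hY : ∀ y, πs' (ηY y) = ηX (πs y)) (hZ : ∀ z, πu' (ηZ z) = ηX (πu z))
    (hconj : Function.Bijective
      (fun z : Z => (⟨(πu z, ηZ z), (hZ z).symm⟩ : {p : X × Z' // ηX p.1 = πu' p.2}))) :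
    Function.Bijective
      (fun s : Sig11 πs πu =>
        (⟨(eta11 πs πu ηX ηY ηZ πs' πu' hY hZ s, delta11 πs πu s),
          Subtype.ext rfl⟩ :
          {p : Sig11 πs' πu' × Sig10 πs πu //
            delta11 πs' πu' p.1 = eta10 πs πu ηX ηY ηZ πs' πu' hY hZ p.2})) := by
  obtain ⟨hinj, hsurj⟩ := hconj
  constructor
  · rintro ⟨⟨⟨y0, y1⟩, z0, z1⟩, h1, h2, h3⟩ ⟨⟨⟨w0, w1⟩, v0, v1⟩, g1, g2, g3⟩ heq
    have heq' := congrArg Subtype.val heq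
    simp only [eta11, delta11, Prod.mk.injEq, Subtype.mk.injEq] at heq'
    obtain ⟨he, hf⟩ := Prod.mk.inj heq'
    have he' := congrArg Subtype.val he
    have hf' := congrArg Subtype.val hf
    simp only [Prod.mk.injEq] at he' hf'
    obtain ⟨⟨e0, e1⟩, e2, e3⟩ := he'
    obtain ⟨⟨f0, f1⟩, f2⟩ := hf'
    subst f0 f1 f2
    have : z1 = v1 := by
      have := hinj (a₁ := z1) (a₂ := v1) (Subtype.ext (Prod.ext (h3.symm.trans g3) e3))
      exact this
    subst this
    rfl
  · rintro ⟨⟨⟨⟨⟨y0', y1'⟩, z0', z1'⟩, a1, a2, a3⟩, ⟨⟨⟨y0, y1⟩, z0⟩, b1, b2⟩⟩, hd⟩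
    have hd' := congrArg Subtype.val hd
    simp only [delta11, eta10, Prod.mk.injEq] at hd'
    obtain ⟨⟨hy0, hy1⟩, hz0⟩ := hd'
    subst hy0 hy1 hz0
    obtain ⟨z1, hz1⟩ := hsurj ⟨(πs y0, z1'), by rw [← hY, a3]⟩
    have hz1' := congrArg Subtype.val hz1
    simp only [Prod.mk.injEq] at hz1'
    obtain ⟨hp, hq⟩ := hz1'
    refine ⟨⟨((y0, y1), (z0, z1)), b1, b2, hp.symm⟩, ?_⟩
    apply Subtype.ext
    refine Prod.ext (Subtype.ext ?_) rfl
    simp only [eta11]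
    exact Prod.ext rfl (Prod.ext rfl hq)
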